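/- For any strongly convex rational polyhedral cone σ ⊂ ℝ^n, the twisted semigroup algebra ℂ_θ[σ] (the subalgebra of the quantum Laurent algebra ℂ_θ(t₁,…,t_n) spanned by characters χ_m, m ∈ σ^∨ ∩ ℤ^n) is a noetherian domain. -/

import Mathlib

noncomputable section

/-- The twisting cocycle `exp((i/2) p·θ·q)`. -/
def thetaCocycle {n : ℕ} (θ : Matrix (Fin n) (Fin n) ℂ) (p q : Fin n → ℤ) : ℂ :=
  Complex.exp ((Complex.I / 2) * ∑ i, ∑ j, (p i : ℂ) * θ i j * (q j : ℂ))

/-- The star product `⋆_θ` of the quantum Laurent algebra `ℂ_θ(t₁,…,t_n)`,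
realized on the group algebra `ℂ[ℤⁿ]`. -/
def starProd {n : ℕ} (θ : Matrix (Fin n) (Fin n) ℂ)
    (f g : (Fin n → ℤ) →₀ ℂ) : (Fin n → ℤ) →₀ ℂ :=
  f.sum fun p a => g.sum fun q b => Finsupp.single (p + q) (a * b * thetaCocycle θ p q)

/-- The twisted semigroup algebra `ℂ_θ[σ]`: the ℂ-span of the characters `χ_m`
for `m ∈ σ^∨ ∩ ℤⁿ`, inside the quantum Laurent algebra. -/
def coneAlg {n : ℕ} (σ : Set (Fin n → ℝ)) : Submodule ℂ ((Fin n → ℤ) →₀ ℂ) :=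
  Submodule.span ℂ
    {x | ∃ p : Fin n → ℤ, (∀ u ∈ σ, 0 ≤ ∑ i, (p i : ℝ) * u i) ∧ x = Finsupp.single p (1 : ℂ)}

instance QTor.finWFLT (K : ℕ) : WellFoundedLT (Fin K) := inferInstance

namespace QTor


variable {K : ℕ}

/-- Strict lex translation invariance. -/
theorem lex_add_right {a b c : Fin K → ℤ} (h : toLex a < toLex b) :
    toLex (a + c) < toLex (b + c) := by
  obtain ⟨i, hi, hlt⟩ := h
  exact ⟨i, fun j hj => by simpa using congrArg (· + c j) (hi j hj), by simpa using hlt⟩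

theorem lex_add_left {a b c : Fin K → ℤ} (h : toLex a < toLex b) :
    toLex (c + a) < toLex (c + b) := by
  obtain ⟨i, hi, hlt⟩ := h
  exact ⟨i, fun j hj => by simpa using congrArg (c j + ·) (hi j hj), by simpa using hlt⟩

theorem lex_add_lt_of_lt_of_le {a b c d : Fin K → ℤ} (h1 : toLex a < toLex b)
    (h2 : toLex c ≤ toLex d) : toLex (a + c) < toLex (b + d) := by
  rcases eq_or_lt_of_le h2 with h2 | h2
  · have : c = d := by simpa using h2
    subst this; exact lex_add_right h1
  · exact (lex_add_right h1).trans (lex_add_left h2)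

/-- Monotonicity of coordinatewise `toNat` for lex, on nonnegative vectors. -/
theorem lex_toNat_lt {a b : Fin K → ℤ} (ha : ∀ x, 0 ≤ a x) (hb : ∀ x, 0 ≤ b x)
    (h : toLex a < toLex b) :
    toLex (fun x => (a x).toNat) < toLex (fun x => (b x).toNat) := by
  obtain ⟨i, hi, hlt⟩ := h
  refine ⟨i, fun j hj => congrArg Int.toNat (hi j hj), ?_⟩
  have h1 : a i < b i := hlt
  have h2 := ha i
  show (a i).toNat < (b i).toNat
  omega

theorem lex_toNat_le {a b : Fin K → ℤ} (ha : ∀ x, 0 ≤ a x) (hb : ∀ x, 0 ≤ b x)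
    (h : toLex a ≤ toLex b) :
    toLex (fun x => (a x).toNat) ≤ toLex (fun x => (b x).toNat) := by
  rcases eq_or_lt_of_le h with h | h
  · have : a = b := by simpa using h
    subst this; exact le_refl _
  · exact le_of_lt (lex_toNat_lt ha hb h)

/-- Dickson's lemma, finite-basis form. -/
theorem dickson (D : Set (Fin K → ℕ)) :
    ∃ D₀ : Finset (Fin K → ℕ), ↑D₀ ⊆ D ∧ ∀ d ∈ D, ∃ e ∈ D₀, ∀ x, e x ≤ d x := by
  classical
  set Min : Set (Fin K → ℕ) :=
    {d | d ∈ D ∧ ∀ d' ∈ D, (∀ x, d' x ≤ d x) → d' = d} with hMin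
  have hmc : ∀ N, ∀ d ∈ D, (∑ x, d x) ≤ N → ∃ e ∈ Min, ∀ x, e x ≤ d x := by
    intro N
    induction N with
    | zero =>
      intro d hd hN
      refine ⟨d, ⟨hd, fun d' hd' hle => ?_⟩, fun x => le_refl _⟩
      have : ∀ x, d x = 0 := by
        intro x
        have := Finset.single_le_sum (f := d) (fun y _ => Nat.zero_le _) (Finset.mem_univ x)
        omega
      funext x
      have h1 := hle x
      have h2 := this x
      omega
    | succ N IH =>
      intro d hd hN
      by_cases hmin : d ∈ Min
      · exact ⟨d, hmin, fun x => le_refl _⟩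
      · have : ∃ d' ∈ D, (∀ x, d' x ≤ d x) ∧ d' ≠ d := by
          simp only [hMin, Set.mem_setOf_eq, not_and, not_forall] at hmin
          obtain ⟨d', hd', hle, hne⟩ := hmin hd
          exact ⟨d', hd', hle, hne⟩
        obtain ⟨d', hd', hle, hne⟩ := this
        have hlt : (∑ x, d' x) < ∑ x, d x := by
          refine Finset.sum_lt_sum (fun x _ => hle x) ?_
          by_contra hc
          push_neg at hc
          exact hne (funext fun x => le_antisymm (hle x) (hc x (Finset.mem_univ x)))
        obtain ⟨e, he, hee⟩ := IH d' hd' (by omega)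
        exact ⟨e, he, fun x => (hee x).trans (hle x)⟩
  have hanti : IsAntichain (· ≤ ·) Min := by
    intro a ha b hb hab hle
    exact hab (hb.2 a ha.1 (fun x => hle x))
  haveI : IsWellOrder ℕ (· < ·) := inferInstance
  have hfin : Min.Finite :=
    hanti.finite_of_partiallyWellOrderedOn (Set.isPWO_of_wellQuasiOrderedLE Min)
  refine ⟨hfin.toFinset, ?_, ?_⟩
  · intro d hd
    have : d ∈ Min := hfin.mem_toFinset.mp hd
    exact this.1
  · intro d hd
    obtain ⟨e, he, hee⟩ := hmc (∑ x, d x) d hd (le_refl _)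
    exact ⟨e, by simpa using he, hee⟩


variable {n : ℕ} (θ : Matrix (Fin n) (Fin n) ℂ)

theorem thetaCocycle_ne_zero (p q : Fin n → ℤ) : thetaCocycle θ p q ≠ 0 :=
  Complex.exp_ne_zero _

/-- The bilinear form in the exponent. -/
def bform (p q : Fin n → ℤ) : ℂ := ∑ i, ∑ j, (p i : ℂ) * θ i j * (q j : ℂ)

theorem thetaCocycle_eq (p q : Fin n → ℤ) :
    thetaCocycle θ p q = Complex.exp ((Complex.I / 2) * bform θ p q) := rfl

theorem bform_neg_left (p q : Fin n → ℤ) : bform θ (-p) q = -bform θ p q := by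
  simp only [bform, Pi.neg_apply, Int.cast_neg, neg_mul, Finset.sum_neg_distrib]

theorem bform_add_right (p q r : Fin n → ℤ) :
    bform θ p (q + r) = bform θ p q + bform θ p r := by
  simp only [bform, Pi.add_apply, Int.cast_add, mul_add, Finset.sum_add_distrib]

theorem bform_self (hθ : ∀ i j, θ j i = -θ i j) (p : Fin n → ℤ) : bform θ p p = 0 := by
  have h : bform θ p p = -bform θ p p := by
    unfold bform
    calc ∑ i, ∑ j, (p i : ℂ) * θ i j * (p j : ℂ)
        = ∑ i, ∑ j, -((p j : ℂ) * θ j i * (p i : ℂ)) := by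
          refine Finset.sum_congr rfl fun i _ => Finset.sum_congr rfl fun j _ => ?_
          rw [hθ j i]; ring
      _ = -∑ i, ∑ j, (p j : ℂ) * θ j i * (p i : ℂ) := by
          simp [Finset.sum_neg_distrib]
      _ = -∑ i, ∑ j, (p i : ℂ) * θ i j * (p j : ℂ) := by rw [Finset.sum_comm]
  linear_combination h / 2

theorem starProd_single_left (w : Fin n → ℤ) (a : ℂ) (g : (Fin n → ℤ) →₀ ℂ) :
    starProd θ (Finsupp.single w a) g =
      g.sum fun q b => Finsupp.single (w + q) (a * b * thetaCocycle θ w q) := by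
  unfold starProd
  apply Finsupp.sum_single_index
  simp [Finsupp.sum]

theorem starProd_zero_right (f : (Fin n → ℤ) →₀ ℂ) : starProd θ f 0 = 0 := by
  unfold starProd
  simp [Finsupp.sum]

theorem starProd_apply (f g : (Fin n → ℤ) →₀ ℂ) (x : Fin n → ℤ) :
    starProd θ f g x = ∑ p ∈ f.support, ∑ q ∈ g.support,
      (if p + q = x then f p * g q * thetaCocycle θ p q else 0) := by
  classical
  unfold starProd Finsupp.sum
  simp only [Finset.sum_apply', Finsupp.single_apply]

theorem support_starProd (f g : (Fin n → ℤ) →₀ ℂ) {x : Fin n → ℤ}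
    (hx : x ∈ (starProd θ f g).support) :
    ∃ p ∈ f.support, ∃ q ∈ g.support, x = p + q := by
  classical
  have hne : starProd θ f g x ≠ 0 := Finsupp.mem_support_iff.mp hx
  rw [starProd_apply] at hne
  obtain ⟨p, hp, hpne⟩ := Finset.exists_ne_zero_of_sum_ne_zero hne
  obtain ⟨q, hq, hqne⟩ := Finset.exists_ne_zero_of_sum_ne_zero hpne
  refine ⟨p, hp, q, hq, ?_⟩
  by_contra hc
  exact hqne (if_neg fun h => hc h.symm)

theorem starProd_single_left_apply (w : Fin n → ℤ) (g : (Fin n → ℤ) →₀ ℂ) (q : Fin n → ℤ) :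
    starProd θ (Finsupp.single w 1) g (w + q) = thetaCocycle θ w q * g q := by
  classical
  rw [starProd_single_left]
  rw [Finsupp.sum_apply]
  unfold Finsupp.sum
  have : ∀ q' ∈ g.support,
      (Finsupp.single (w + q') (1 * g q' * thetaCocycle θ w q')) (w + q)
        = if q' = q then thetaCocycle θ w q * g q else 0 := by
    intro q' _
    rw [Finsupp.single_apply]
    by_cases h : q' = q
    · subst h; simp [mul_comm]
    · rw [if_neg (by intro hc; exact h (by ext i; have := congrFun hc i; simpa using this)),
        if_neg h]
  rw [Finset.sum_congr rfl this, Finset.sum_ite_eq' g.support q]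
  by_cases hq : q ∈ g.support
  · rw [if_pos hq]
  · rw [if_neg hq]
    have : g q = 0 := Finsupp.notMem_support_iff.mp hq
    rw [this, mul_zero]

theorem support_starProd_single_left (w : Fin n → ℤ) (g : (Fin n → ℤ) →₀ ℂ)
    {x : Fin n → ℤ} (hx : x ∈ (starProd θ (Finsupp.single w 1) g).support) :
    ∃ q ∈ g.support, x = w + q := by
  obtain ⟨p, hp, q, hq, rfl⟩ := support_starProd θ _ _ hx
  have : p = w := by
    have := Finsupp.support_single_subset hp
    simpa using this
  exact ⟨q, hq, by rw [this]⟩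

theorem starProd_neg_cancel (hθ : ∀ i j, θ j i = -θ i j) (w : Fin n → ℤ)
    (g : (Fin n → ℤ) →₀ ℂ) :
    starProd θ (Finsupp.single (-w) 1) (starProd θ (Finsupp.single w 1) g) = g := by
  classical
  rw [starProd_single_left, starProd_single_left]
  rw [Finsupp.sum_sum_index (fun a => by simp) (fun a b₁ b₂ => by
    rw [← Finsupp.single_add]; congr 1; ring)]
  have : ∀ (q : Fin n → ℤ) (b : ℂ),
      (Finsupp.single (w + q) (1 * b * thetaCocycle θ w q)).sum
        (fun r c => Finsupp.single (-w + r) (1 * c * thetaCocycle θ (-w) r))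
        = Finsupp.single q b := by
    intro q b
    rw [Finsupp.sum_single_index (by simp)]
    have hkey : thetaCocycle θ w q * thetaCocycle θ (-w) (w + q) = 1 := by
      rw [thetaCocycle_eq, thetaCocycle_eq, ← Complex.exp_add, ← mul_add,
        bform_neg_left, bform_add_right, bform_self θ hθ]
      ring_nf
      exact Complex.exp_zero
    have harg : -w + (w + q) = q := by ext i; simp
    rw [harg]
    congr 1
    calc 1 * (1 * b * thetaCocycle θ w q) * thetaCocycle θ (-w) (w + q)
        = b * (thetaCocycle θ w q * thetaCocycle θ (-w) (w + q)) := by ring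
      _ = b := by rw [hkey, mul_one]
  calc (g.sum fun q b => (Finsupp.single (w + q) (1 * b * thetaCocycle θ w q)).sum
          fun r c => Finsupp.single (-w + r) (1 * c * thetaCocycle θ (-w) r))
      = g.sum fun q b => Finsupp.single q b := by
        refine Finsupp.sum_congr fun q hq => this q (g q)
    _ = g := Finsupp.sum_single g

end QTor

namespace QTor

variable {n : ℕ} (θ : Matrix (Fin n) (Fin n) ℂ)

/-- Every nonzero finsupp has a leading exponent w.r.t. an injective lex weight. -/
theorem exists_lead {K : ℕ} (ψ : (Fin n → ℤ) → (Fin K → ℤ)) (hψinj : Function.Injective ψ)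
    {f : (Fin n → ℤ) →₀ ℂ} (hf : f ≠ 0) :
    ∃ e ∈ f.support, ∀ p ∈ f.support, p ≠ e → toLex (ψ p) < toLex (ψ e) := by
  classical
  have hne : (f.support.image (fun p => toLex (ψ p))).Nonempty := by
    simp [Finsupp.support_nonempty_iff.mpr hf]
  obtain ⟨e, hem, he⟩ :=
    Finset.mem_image.mp ((f.support.image fun p => toLex (ψ p)).max'_mem hne)
  refine ⟨e, hem, fun p hp hpe => ?_⟩
  have hle : toLex (ψ p) ≤ toLex (ψ e) := by
    rw [he]
    exact (f.support.image fun p => toLex (ψ p)).le_max' _ (Finset.mem_image_of_mem _ hp)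
  refine lt_of_le_of_ne hle (fun hc => hpe ?_)
  exact hψinj (by simpa using hc)

theorem starProd_ne_zero {f g : (Fin n → ℤ) →₀ ℂ} (hf : f ≠ 0) (hg : g ≠ 0) :
    starProd θ f g ≠ 0 := by
  classical
  obtain ⟨p₀, hp₀, hp₀max⟩ := exists_lead id Function.injective_id hf
  obtain ⟨q₀, hq₀, hq₀max⟩ := exists_lead id Function.injective_id hg
  have hval : starProd θ f g (p₀ + q₀) = f p₀ * g q₀ * thetaCocycle θ p₀ q₀ := by
    rw [starProd_apply]
    rw [Finset.sum_eq_single p₀]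
    · rw [Finset.sum_eq_single q₀]
      · rw [if_pos rfl]
      · intro q hq hqne
        exact if_neg (fun hc => hqne (by
          have := add_left_cancel hc
          exact this))
      · intro hc; exact absurd hq₀ hc
    · intro p hp hpne
      refine Finset.sum_eq_zero fun q hq => if_neg fun hc => ?_
      have h1 : toLex p < toLex p₀ := hp₀max p hp hpne
      have h2 : toLex q ≤ toLex q₀ := by
        rcases eq_or_ne q q₀ with rfl | hne
        · exact le_refl _
        · exact le_of_lt (hq₀max q hq hne)
      have h3 : toLex (p + q) < toLex (p₀ + q₀) := lex_add_lt_of_lt_of_le h1 h2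
      rw [hc] at h3
      exact lt_irrefl _ h3
    · intro hc; exact absurd hp₀ hc
  intro hzero
  rw [hzero] at hval
  have : f p₀ * g q₀ * thetaCocycle θ p₀ q₀ ≠ 0 :=
    mul_ne_zero (mul_ne_zero (Finsupp.mem_support_iff.mp hp₀) (Finsupp.mem_support_iff.mp hq₀))
      (thetaCocycle_ne_zero θ _ _)
  exact this (by simpa using hval.symm)

end QTor

namespace QTor

set_option maxHeartbeats 1000000 in
theorem noeth_core {n K : ℕ} (θ : Matrix (Fin n) (Fin n) ℂ)
    (hθ : ∀ i j, θ j i = -θ i j)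
    (ψ : (Fin n → ℤ) → (Fin K → ℤ))
    (hψadd : ∀ p q, ψ (p + q) = ψ p + ψ q)
    (hψinj : Function.Injective ψ)
    (S : Set (Fin n → ℤ))
    (hS' : ∀ p, (∀ x, 0 ≤ ψ p x) → p ∈ S)
    (hshift : ∀ F : Finset (Fin n → ℤ), ↑F ⊆ S →
      ∃ w, w ∈ S ∧ -w ∈ S ∧ ∀ p ∈ F, ∀ x, 0 ≤ ψ (p + w) x)
    (I : Submodule ℂ ((Fin n → ℤ) →₀ ℂ)) (hIle : I ≤ Finsupp.supported ℂ ℂ S)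
    (hI : ∀ f ∈ Finsupp.supported ℂ ℂ S, ∀ x ∈ I, starProd θ f x ∈ I ∧ starProd θ x f ∈ I) :
    ∃ T : Finset ((Fin n → ℤ) →₀ ℂ), ↑T ⊆ (I : Set ((Fin n → ℤ) →₀ ℂ)) ∧
      ∀ J : Submodule ℂ ((Fin n → ℤ) →₀ ℂ), J ≤ Finsupp.supported ℂ ℂ S →
        (∀ f ∈ Finsupp.supported ℂ ℂ S, ∀ x ∈ J, starProd θ f x ∈ J ∧ starProd θ x f ∈ J) →
        ↑T ⊆ (J : Set ((Fin n → ℤ) →₀ ℂ)) → I ≤ J := by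
  classical
  set S' : Set (Fin n → ℤ) := {p | ∀ x, 0 ≤ ψ p x} with hS'def
  have hsingle : ∀ p ∈ S, Finsupp.single p (1 : ℂ) ∈ Finsupp.supported ℂ ℂ S :=
    fun p hp => Finsupp.single_mem_supported ℂ 1 hp
  -- the set of toNat'd leading weights of S'-supported elements of I
  set D : Set (Fin K → ℕ) := {d | ∃ f e, f ∈ I ∧ ↑f.support ⊆ S' ∧
    (e ∈ f.support ∧ ∀ p ∈ f.support, p ≠ e → toLex (ψ p) < toLex (ψ e)) ∧
    ∀ x, (d x : ℤ) = ψ e x} with hD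
  obtain ⟨D₀, hD₀sub, hD₀cov⟩ := dickson D
  have hwit : ∀ d ∈ D₀, ∃ f, ∃ e, f ∈ I ∧ ↑f.support ⊆ S' ∧
      (e ∈ f.support ∧ ∀ p ∈ f.support, p ≠ e → toLex (ψ p) < toLex (ψ e)) ∧
      ∀ x, (d x : ℤ) = ψ e x := fun d hd => hD₀sub hd
  set T : Finset ((Fin n → ℤ) →₀ ℂ) :=
    D₀.attach.image (fun d => (hwit d.1 d.2).choose) with hT
  have hTsub : ↑T ⊆ (I : Set ((Fin n → ℤ) →₀ ℂ)) := by
    intro t ht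
    obtain ⟨d, _, rfl⟩ := Finset.mem_image.mp ht
    obtain ⟨e, hfI, -⟩ := (hwit d.1 d.2).choose_spec
    exact hfI
  refine ⟨T, hTsub, ?_⟩
  intro J hJle hJ hTJ
  -- main reduction for S'-supported elements
  have main : ∀ b : Lex (Fin K → ℕ), ∀ g, g ∈ I → ↑g.support ⊆ S' →
      (∀ p ∈ g.support, toLex (fun x => (ψ p x).toNat) ≤ b) → g ∈ J := by
    intro b
    induction b using WellFoundedLT.induction with
    | _ b IH =>
    intro g hgI hgS hgb
    rcases eq_or_ne g 0 with rfl | hg0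
    · exact J.zero_mem
    obtain ⟨e, he, hemax⟩ := exists_lead ψ hψinj hg0
    have heS' : ∀ x, 0 ≤ ψ e x := hgS he
    have hdD : (fun x => (ψ e x).toNat) ∈ D :=
      ⟨g, e, hgI, hgS, ⟨he, hemax⟩, fun x => Int.toNat_of_nonneg (heS' x)⟩
    obtain ⟨d₀, hd₀, hd₀le⟩ := hD₀cov _ hdD
    obtain ⟨e₀, hhI, hhS, ⟨he₀, he₀max⟩, hd₀eq⟩ := (hwit d₀ hd₀).choose_spec
    set h := (hwit d₀ hd₀).choose with hh
    have hhT : h ∈ T := Finset.mem_image.mpr ⟨⟨d₀, hd₀⟩, Finset.mem_attach _ _, rfl⟩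
    set s := e - e₀ with hs
    have hse : s + e₀ = e := by rw [hs]; abel
    have hψs : ∀ x, ψ s x = ψ e x - ψ e₀ x := by
      intro x
      have h1 : ψ (s + e₀) = ψ s + ψ e₀ := hψadd s e₀
      rw [hse] at h1
      have := congrFun h1 x
      simp only [Pi.add_apply] at this
      omega
    have hsS' : ∀ x, 0 ≤ ψ s x := by
      intro x
      rw [hψs x]
      have h1 : (d₀ x : ℤ) = ψ e₀ x := hd₀eq x
      have h2 : d₀ x ≤ (ψ e x).toNat := hd₀le x
      have h3 : 0 ≤ ψ e x := heS' x
      omega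
    have hsS : s ∈ S := hS' s hsS'
    set X := starProd θ (Finsupp.single s 1) h with hX
    have hXI : X ∈ I := (hI _ (hsingle s hsS) h hhI).1
    have hXJ : X ∈ J := (hJ _ (hsingle s hsS) h (hTJ hhT)).1
    have hXe : X e = thetaCocycle θ s e₀ * h e₀ := by
      rw [← hse]
      exact starProd_single_left_apply θ s h e₀
    have hXne : X e ≠ 0 := by
      rw [hXe]
      exact mul_ne_zero (thetaCocycle_ne_zero θ _ _) (Finsupp.mem_support_iff.mp he₀)
    set c := g e / X e with hc
    set r := g - c • X with hr
    have hrI : r ∈ I := sub_mem hgI (Submodule.smul_mem _ _ hXI)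
    have hre : r e = 0 := by
      rw [hr]
      rw [Finsupp.sub_apply, Finsupp.smul_apply, smul_eq_mul, hc,
        div_mul_cancel₀ _ hXne, sub_self]
    have hgeq : g = r + c • X := by rw [hr]; abel
    have hrsupp : ∀ p ∈ r.support,
        (p ∈ g.support ∨ ∃ q ∈ h.support, p = s + q) ∧ p ≠ e := by
      intro p hp
      have hrp : r p ≠ 0 := Finsupp.mem_support_iff.mp hp
      constructor
      · by_cases hpg : p ∈ g.support
        · exact Or.inl hpg
        · have hgp : g p = 0 := Finsupp.notMem_support_iff.mp hpg
          have hXp : X p ≠ 0 := by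
            intro hc0
            apply hrp
            rw [hr, Finsupp.sub_apply, Finsupp.smul_apply, smul_eq_mul, hgp, hc0,
              mul_zero, sub_zero]
          exact Or.inr (support_starProd_single_left θ s h (Finsupp.mem_support_iff.mpr hXp))
      · intro hpe
        rw [hpe] at hrp
        exact hrp hre
    have hrS' : ↑r.support ⊆ S' := by
      intro p hp
      rcases (hrsupp p hp).1 with hpg | ⟨q, hq, rfl⟩
      · exact hgS hpg
      · intro x
        have h1 : ψ (s + q) = ψ s + ψ q := hψadd s q
        have := congrFun h1 x
        simp only [Pi.add_apply] at this
        have h2 := hsS' x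
        have h3 := hhS hq x
        omega
    have hrlt : ∀ p ∈ r.support, toLex (ψ p) < toLex (ψ e) := by
      intro p hp
      obtain ⟨hcase, hpe⟩ := hrsupp p hp
      rcases hcase with hpg | ⟨q, hq, rfl⟩
      · exact hemax p hpg hpe
      · rcases eq_or_ne q e₀ with rfl | hqe
        · exact absurd hse.symm (fun hcon => hpe hcon.symm)
        · have h1 : toLex (ψ q) < toLex (ψ e₀) := he₀max q hq hqe
          have h2 : toLex (ψ (s + q)) < toLex (ψ (s + e₀)) := by
            rw [hψadd, hψadd]
            exact lex_add_left h1
          rw [hse] at h2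
          exact h2
    rcases eq_or_ne r 0 with hr0 | hr0
    · rw [hgeq, hr0, zero_add]
      exact Submodule.smul_mem _ _ hXJ
    · obtain ⟨e', he', he'max⟩ := exists_lead ψ hψinj hr0
      have hb' : toLex (fun x => (ψ e' x).toNat) < b := by
        have h1 : toLex (ψ e') < toLex (ψ e) := hrlt e' he'
        exact lt_of_lt_of_le (lex_toNat_lt (hrS' he') heS' h1) (hgb e he)
      have hrJ : r ∈ J := by
        refine IH _ hb' r hrI hrS' (fun p hp => ?_)
        rcases eq_or_ne p e' with rfl | hpe
        · exact le_refl _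
        · exact le_of_lt (lex_toNat_lt (hrS' hp) (hrS' he') (he'max p hp hpe))
      rw [hgeq]
      exact add_mem hrJ (Submodule.smul_mem _ _ hXJ)
  -- now the general case, by translating into the positive region
  intro f hfI
  have hfS : ↑f.support ⊆ S := Finsupp.mem_supported ℂ f |>.mp (hIle hfI)
  obtain ⟨w, hwS, hwnS, hw⟩ := hshift f.support hfS
  set f' := starProd θ (Finsupp.single w 1) f with hf'
  have hf'I : f' ∈ I := (hI _ (hsingle w hwS) f hfI).1
  have hf'S : ↑f'.support ⊆ S' := by
    intro p hp
    obtain ⟨q, hq, rfl⟩ := support_starProd_single_left θ w f hp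
    intro x
    have : w + q = q + w := by abel
    rw [this]
    exact hw q hq x
  have hfromf' : f = starProd θ (Finsupp.single (-w) 1) f' :=
    (starProd_neg_cancel θ hθ w f).symm
  rcases eq_or_ne f' 0 with hf'0 | hf'0
  · have : f = 0 := by rw [hfromf', hf'0, starProd_zero_right]
    rw [this]
    exact J.zero_mem
  · obtain ⟨e'', he'', he''max⟩ := exists_lead ψ hψinj hf'0
    have hf'J : f' ∈ J := by
      refine main (toLex fun x => (ψ e'' x).toNat) f' hf'I hf'S (fun p hp => ?_)
      rcases eq_or_ne p e'' with rfl | hpe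
      · exact le_refl _
      · exact le_of_lt (lex_toNat_lt (hf'S hp) (hf'S he'') (he''max p hp hpe))
    rw [hfromf']
    exact (hJ _ (hsingle (-w) hwnS) f' hf'J).1

end QTor

namespace QTor

theorem sum_mul_sum_swap {α : Type*} [CommRing α] {n m : ℕ} (a : Fin n → α) (c : Fin m → α)
    (b : Fin m → Fin n → α) :
    ∑ i, a i * (∑ t, c t * b t i) = ∑ t, c t * (∑ i, a i * b t i) := by
  simp only [Finset.mul_sum]
  rw [Finset.sum_comm]
  exact Finset.sum_congr rfl fun t _ => Finset.sum_congr rfl fun i _ => by ring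

theorem sq_sum_eq_zero {n : ℕ} (w : Fin n → ℤ) (h : ∑ i, w i * w i = 0) : w = 0 := by
  have hz : ∀ i ∈ Finset.univ, w i * w i = 0 := by
    rw [← Finset.sum_eq_zero_iff_of_nonneg (fun i _ => mul_self_nonneg (w i))]
    exact h
  funext i
  exact mul_self_eq_zero.mp (hz i (Finset.mem_univ i))

theorem exists_psi {n s : ℕ} (v : Fin s → Fin n → ℤ) :
    ∃ (m : ℕ) (u : Fin m → Fin n → ℤ),
      (∀ t k, ∑ i, u t i * v k i = 0) ∧
      (∀ p : Fin n → ℤ, (∀ k, ∑ i, p i * v k i = 0) →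
        (∀ t, ∑ i, p i * u t i = 0) → p = 0) ∧
      (∀ z : Fin m → ℤ, ∃ w : Fin n → ℤ,
        (∀ k, ∑ i, w i * v k i = 0) ∧ ∀ t, z t ≤ ∑ i, w i * u t i) := by
  classical
  set A : (Fin n → ℤ) →ₗ[ℤ] (Fin s → ℤ) :=
    { toFun := fun p => fun k => ∑ i, p i * v k i
      map_add' := by
        intro p q
        funext k
        simp only [Pi.add_apply, add_mul, Finset.sum_add_distrib]
      map_smul' := by
        intro c p
        funext k
        simp only [Pi.smul_apply, smul_eq_mul, RingHom.id_apply, Finset.mul_sum]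
        exact Finset.sum_congr rfl fun i _ => by ring } with hA
  obtain ⟨m, β⟩ := Submodule.basisOfPid (Pi.basisFun ℤ (Fin n)) (LinearMap.ker A)
  set u : Fin m → (Fin n → ℤ) := fun t => ((β t : LinearMap.ker A) : Fin n → ℤ) with hu
  have hAu : ∀ t, A (u t) = 0 := fun t => LinearMap.mem_ker.mp (β t).2
  have hu1 : ∀ t k, ∑ i, u t i * v k i = 0 := by
    intro t k
    exact congrFun (hAu t) k
  -- any element of the kernel is an integer combination of the `u t`
  have hspan : ∀ p : Fin n → ℤ, (∀ k, ∑ i, p i * v k i = 0) →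
      ∃ c : Fin m → ℤ, ∀ i, p i = ∑ t, c t * u t i := by
    intro p hp
    have hpk : p ∈ LinearMap.ker A := LinearMap.mem_ker.mpr (funext hp)
    set x : LinearMap.ker A := ⟨p, hpk⟩ with hx
    refine ⟨fun t => β.repr x t, fun i => ?_⟩
    have hrepr : ∑ t, β.repr x t • β t = x := β.sum_repr x
    have := congrArg (fun y : LinearMap.ker A => (y : Fin n → ℤ) i) hrepr
    simp only [AddSubmonoidClass.coe_finset_sum, SetLike.val_smul, Finset.sum_apply,
      Pi.smul_apply, smul_eq_mul] at this
    exact this.symm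
  -- independence of the `u t`
  have hindep : ∀ c : Fin m → ℤ, (∀ i, ∑ t, c t * u t i = 0) → c = 0 := by
    intro c hc
    have hsum : ∑ t, c t • β t = (0 : LinearMap.ker A) := by
      apply Subtype.ext
      simp only [AddSubmonoidClass.coe_finset_sum, SetLike.val_smul, ZeroMemClass.coe_zero]
      funext i
      simpa using hc i
    have := Fintype.linearIndependent_iff.mp β.linearIndependent c hsum
    funext t
    exact this t
  have hu2 : ∀ p : Fin n → ℤ, (∀ k, ∑ i, p i * v k i = 0) →
      (∀ t, ∑ i, p i * u t i = 0) → p = 0 := by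
    intro p hpv hpu
    obtain ⟨c, hc⟩ := hspan p hpv
    have hself : ∑ i, p i * p i = 0 := by
      calc ∑ i, p i * p i = ∑ i, p i * (∑ t, c t * u t i) := by
            exact Finset.sum_congr rfl fun i _ => by rw [← hc i]
        _ = ∑ t, c t * (∑ i, p i * u t i) := sum_mul_sum_swap p c u
        _ = 0 := by
            refine Finset.sum_eq_zero fun t _ => ?_
            rw [hpu t, mul_zero]
    exact sq_sum_eq_zero p hself
  -- the Gram matrix
  set G : Matrix (Fin m) (Fin m) ℤ := Matrix.of fun r t => ∑ i, u r i * u t i with hG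
  have hGmul : ∀ (c : Fin m → ℤ) (r : Fin m),
      G.mulVec c r = ∑ i, (∑ t, c t * u t i) * u r i := by
    intro c r
    simp only [Matrix.mulVec, dotProduct, hG, Matrix.of_apply]
    rw [show ∀ z : Fin m → ℤ, ∑ t, (∑ i, u r i * u t i) * z t
        = ∑ t, z t * (∑ i, u r i * u t i) from fun z =>
          Finset.sum_congr rfl fun t _ => by ring]
    rw [← sum_mul_sum_swap (fun i => u r i) c u]
    exact Finset.sum_congr rfl fun i _ => by ring
  have hGdet : G.det ≠ 0 := by
    intro h0
    obtain ⟨c, hc0, hcG⟩ := Matrix.exists_mulVec_eq_zero_iff.mpr h0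
    set w : Fin n → ℤ := fun i => ∑ t, c t * u t i with hw
    have hwu : ∀ r, ∑ i, w i * u r i = 0 := by
      intro r
      have := congrFun hcG r
      rw [hGmul c r] at this
      simpa [hw] using this
    have hwsq : ∑ i, w i * w i = 0 := by
      calc ∑ i, w i * w i = ∑ i, w i * (∑ t, c t * u t i) := rfl
        _ = ∑ t, c t * (∑ i, w i * u t i) := sum_mul_sum_swap w c u
        _ = 0 := Finset.sum_eq_zero fun t _ => by rw [hwu t, mul_zero]
    have hw0 : w = 0 := sq_sum_eq_zero w hwsq
    have : c = 0 := hindep c (fun i => congrFun hw0 i)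
    exact hc0 this
  -- cofinality
  refine ⟨m, u, hu1, hu2, ?_⟩
  intro z
  have habs : 1 ≤ |G.det| := Int.one_le_abs (by exact hGdet)
  set y : Fin m → ℤ := fun t => if 0 < G.det then |z t| else -|z t| with hy
  set c : Fin m → ℤ := G.adjugate.mulVec y with hc
  have hGc : G.mulVec c = G.det • y := by
    rw [hc, Matrix.mulVec_mulVec, Matrix.mul_adjugate, Matrix.smul_mulVec,
      Matrix.one_mulVec]
  set w : Fin n → ℤ := fun i => ∑ t, c t * u t i with hw
  refine ⟨w, ?_, ?_⟩
  · intro k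
    have : A w = 0 := by
      have : w = ∑ t, c t • u t := by
        funext i
        simp [hw, Finset.sum_apply, Pi.smul_apply, smul_eq_mul]
      rw [this, map_sum]
      refine Finset.sum_eq_zero fun t _ => ?_
      rw [map_smul, hAu t, smul_zero]
    exact congrFun this k
  · intro t
    have h1 : ∑ i, w i * u t i = G.mulVec c t := (hGmul c t).symm
    rw [h1, hGc]
    simp only [Pi.smul_apply, smul_eq_mul, hy]
    rcases lt_trichotomy G.det 0 with hlt | heq | hgt
    · rw [if_neg (by omega)]
      have := abs_nonneg (z t)
      have := le_abs_self (z t)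
      nlinarith [abs_nonneg (z t), le_abs_self (z t)]
    · exact absurd heq hGdet
    · rw [if_pos hgt]
      nlinarith [abs_nonneg (z t), le_abs_self (z t)]

end QTor

set_option maxHeartbeats 2000000 in
open QTor in
/-- for any strongly convex rational polyhedral cone `σ ⊂ ℝⁿ`, the twisted
semigroup algebra `ℂ_θ[σ]` is a noetherian domain: it is closed under `⋆_θ`, has no zero
divisors, and every two-sided `⋆_θ`-ideal of it is finitely generated. -/
theorem coneAlg_noetherian_domain {n s : ℕ} (θ : Matrix (Fin n) (Fin n) ℂ)
    (hθ : ∀ i j, θ j i = -θ i j)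
    (v : Fin s → Fin n → ℤ) (σ : Set (Fin n → ℝ))
    (hσ : σ = {x | ∃ c : Fin s → ℝ, (∀ k, 0 ≤ c k) ∧
      x = ∑ k, c k • (fun i => (v k i : ℝ))})
    (hconv : ∀ x ∈ σ, -x ∈ σ → x = 0) :
    -- ℂ_θ[σ] is a subalgebra of the quantum Laurent algebra
    (∀ f ∈ coneAlg σ, ∀ g ∈ coneAlg σ, starProd θ f g ∈ coneAlg σ) ∧
    -- domain: no zero divisors
    (∀ f ∈ coneAlg σ, ∀ g ∈ coneAlg σ, starProd θ f g = 0 → f = 0 ∨ g = 0) ∧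
    -- noetherian: every two-sided ⋆_θ-ideal I of ℂ_θ[σ] is finitely generated,
    -- i.e. I is the smallest two-sided ideal containing some finite subset T
    (∀ I : Submodule ℂ ((Fin n → ℤ) →₀ ℂ), I ≤ coneAlg σ →
      (∀ f ∈ coneAlg σ, ∀ x ∈ I, starProd θ f x ∈ I ∧ starProd θ x f ∈ I) →
      ∃ T : Finset ((Fin n → ℤ) →₀ ℂ), ↑T ⊆ (I : Set ((Fin n → ℤ) →₀ ℂ)) ∧
        ∀ J : Submodule ℂ ((Fin n → ℤ) →₀ ℂ), J ≤ coneAlg σ →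
          (∀ f ∈ coneAlg σ, ∀ x ∈ J, starProd θ f x ∈ J ∧ starProd θ x f ∈ J) →
          ↑T ⊆ (J : Set ((Fin n → ℤ) →₀ ℂ)) → I ≤ J) := by
  classical
  set S : Set (Fin n → ℤ) := {p | ∀ k, 0 ≤ ∑ i, p i * v k i} with hS
  have hSiff : ∀ p : Fin n → ℤ, (∀ u ∈ σ, 0 ≤ ∑ i, (p i : ℝ) * u i) ↔ p ∈ S := by
    intro p
    constructor
    · intro hp k
      have hvk : (fun i => (v k i : ℝ)) ∈ σ := by
        rw [hσ]
        refine ⟨fun k' => if k' = k then 1 else 0, fun k' => by by_cases h : k' = k <;> simp [h], ?_⟩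
        funext i
        simp only [Finset.sum_apply, Pi.smul_apply, smul_eq_mul]
        rw [Finset.sum_eq_single k]
        · simp
        · intro b _ hb; simp [hb]
        · intro h; exact absurd (Finset.mem_univ k) h
      have h1 := hp _ hvk
      have h2 : (0:ℝ) ≤ ∑ i, (p i : ℝ) * (v k i : ℝ) := h1
      exact_mod_cast h2
    · intro hp u hu
      rw [hσ] at hu
      obtain ⟨c, hc0, rfl⟩ := hu
      have hre : ∀ i, (∑ k, c k • (fun i => (v k i : ℝ))) i = ∑ k, c k * (v k i : ℝ) := by
        intro i
        simp [Finset.sum_apply, Pi.smul_apply, smul_eq_mul]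
      calc (0:ℝ) ≤ ∑ k, c k * ∑ i, (p i : ℝ) * (v k i : ℝ) := by
            refine Finset.sum_nonneg fun k _ => mul_nonneg (hc0 k) ?_
            have := hp k
            exact_mod_cast this
        _ = ∑ i, (p i : ℝ) * ∑ k, c k * (v k i : ℝ) :=
            (sum_mul_sum_swap (fun i => (p i : ℝ)) c (fun k i => (v k i : ℝ))).symm
        _ = ∑ i, (p i : ℝ) * (∑ k, c k • (fun i => (v k i : ℝ))) i := by
            refine Finset.sum_congr rfl fun i _ => ?_
            rw [hre i]
  have hCA : coneAlg σ = Finsupp.supported ℂ ℂ S := by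
    unfold coneAlg
    rw [Finsupp.supported_eq_span_single]
    congr 1
    ext x
    simp only [Set.mem_setOf_eq, Set.mem_image]
    constructor
    · rintro ⟨p, h1, rfl⟩; exact ⟨p, (hSiff p).mp h1, rfl⟩
    · rintro ⟨p, hp, rfl⟩; exact ⟨p, (hSiff p).mpr hp, rfl⟩
  have hmem : ∀ f : (Fin n → ℤ) →₀ ℂ, f ∈ coneAlg σ ↔ ↑f.support ⊆ S := by
    intro f; rw [hCA]; exact Finsupp.mem_supported ℂ f
  refine ⟨?_, ?_, ?_⟩
  · -- closure under the star product
    intro f hf g hg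
    rw [hmem] at hf hg ⊢
    intro x hx
    obtain ⟨p, hp, q, hq, rfl⟩ := support_starProd θ f g hx
    intro k
    have h1 := hf hp k
    have h2 := hg hq k
    have h3 : ∑ i, (p + q) i * v k i = (∑ i, p i * v k i) + ∑ i, q i * v k i := by
      simp only [Pi.add_apply, add_mul, Finset.sum_add_distrib]
    rw [h3]
    omega
  · -- no zero divisors
    intro f _ g _ hz
    by_contra hc
    push_neg at hc
    exact starProd_ne_zero θ hc.1 hc.2 hz
  · -- noetherianity
    intro I hIle hI
    obtain ⟨m, u, hu1, hu2, hu3⟩ := exists_psi v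
    set ψ : (Fin n → ℤ) → (Fin (s + m) → ℤ) := fun p =>
      Fin.append (fun k => ∑ i, p i * v k i) (fun t => ∑ i, p i * u t i) with hψ
    have hψadd : ∀ p q, ψ (p + q) = ψ p + ψ q := by
      intro p q
      funext x
      show ψ (p + q) x = ψ p x + ψ q x
      refine Fin.addCases (fun k => ?_) (fun t => ?_) x
      · simp only [hψ, Fin.append_left, Pi.add_apply, add_mul, Finset.sum_add_distrib]
      · simp only [hψ, Fin.append_right, Pi.add_apply, add_mul, Finset.sum_add_distrib]
    have hψinj : Function.Injective ψ := by
      intro p q hpq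
      have hd : p - q = 0 → p = q := fun h => sub_eq_zero.mp h
      apply hd
      apply hu2
      · intro k
        have h1 := congrFun hpq (Fin.castAdd m k)
        simp only [hψ, Fin.append_left] at h1
        have h2 : ∑ i, (p - q) i * v k i = (∑ i, p i * v k i) - ∑ i, q i * v k i := by
          simp only [Pi.sub_apply, sub_mul, Finset.sum_sub_distrib]
        rw [h2, h1, sub_self]
      · intro t
        have h1 := congrFun hpq (Fin.natAdd s t)
        simp only [hψ, Fin.append_right] at h1
        have h2 : ∑ i, (p - q) i * u t i = (∑ i, p i * u t i) - ∑ i, q i * u t i := by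
          simp only [Pi.sub_apply, sub_mul, Finset.sum_sub_distrib]
        rw [h2, h1, sub_self]
    have hS'c : ∀ p : Fin n → ℤ, (∀ x, 0 ≤ ψ p x) → p ∈ S := by
      intro p hp k
      have := hp (Fin.castAdd m k)
      simpa only [hψ, Fin.append_left] using this
    have hshift : ∀ F : Finset (Fin n → ℤ), ↑F ⊆ S →
        ∃ w, w ∈ S ∧ -w ∈ S ∧ ∀ p ∈ F, ∀ x, 0 ≤ ψ (p + w) x := by
      intro F hF
      obtain ⟨w, hwv, hwu⟩ := hu3 (fun t => ∑ p ∈ F, |∑ i, p i * u t i|)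
      refine ⟨w, ?_, ?_, ?_⟩
      · intro k
        rw [hwv k]
      · intro k
        have h1 : ∑ i, (-w) i * v k i = -∑ i, w i * v k i := by
          simp only [Pi.neg_apply, neg_mul, Finset.sum_neg_distrib]
        rw [h1, hwv k]
        norm_num
      · intro p hp x
        refine Fin.addCases (fun k => ?_) (fun t => ?_) x
        · simp only [hψ, Fin.append_left]
          have h1 : ∑ i, (p + w) i * v k i = (∑ i, p i * v k i) + ∑ i, w i * v k i := by
            simp only [Pi.add_apply, add_mul, Finset.sum_add_distrib]
          rw [h1, hwv k]
          have := hF hp k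
          omega
        · simp only [hψ, Fin.append_right]
          have h1 : ∑ i, (p + w) i * u t i = (∑ i, p i * u t i) + ∑ i, w i * u t i := by
            simp only [Pi.add_apply, add_mul, Finset.sum_add_distrib]
          rw [h1]
          have h2 : |∑ i, p i * u t i| ≤ ∑ p' ∈ F, |∑ i, p' i * u t i| := by
            apply Finset.single_le_sum (f := fun p' => |∑ i, p' i * u t i|)
              (fun _ _ => abs_nonneg _) hp
          have h3 : ∑ p' ∈ F, |∑ i, p' i * u t i| ≤ ∑ i, w i * u t i := hwu t
          have h4 := neg_abs_le (∑ i, p i * u t i)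
          linarith
    rw [hCA] at hIle hI ⊢
    exact noeth_core θ hθ ψ hψadd hψinj S hS'c hshift I hIle hI
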